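/- If m and y are integers with m ≥ 4 and 1 ≤ y ≤ ⌊(m-2)/2⌋, then (L_{m-2} + L_{m-4y}) / (5·F_{m-1}) > √5 − 2. Moreover, if m ≥ 4 and m ∉ {5, 7}, then (L_{m-2} + L_{m-4}) / (5·F_{m-1}) ≥ 8/21. -/

import Mathlib

set_option maxHeartbeats 1000000


private lemma stmt18_aux1 (f g a : ℤ) (hf : 1 ≤ f) (_hg : 0 ≤ g) (h3 : f ≤ 3 * g)
    (ha : f + g + 1 ≤ a) : 125 * f ^ 2 < (a + 10 * f) ^ 2 := by
  have h2 : 34 * f + 3 ≤ 3 * (a + 10 * f) := by linarith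
  have h3' : (0:ℤ) ≤ 34 * f + 3 := by linarith
  have hsq : (34 * f + 3) * (34 * f + 3) ≤ (3 * (a + 10 * f)) * (3 * (a + 10 * f)) :=
    mul_le_mul h2 h2 h3' (by linarith)
  have hff : 1 * 1 ≤ f * f := mul_le_mul hf hf (by norm_num) (by linarith)
  nlinarith [hsq, hff, hf]

private lemma stmt18_aux2 (f u a : ℤ) (hf : 1 ≤ f) (hu : 0 ≤ u)
    (key : (5 * u + 10 * f) ^ 2 = 125 * f ^ 2 + 100) (ha : 5 * u ≤ a) :
    125 * f ^ 2 < (a + 10 * f) ^ 2 := by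
  have h1 : 5 * u + 10 * f ≤ a + 10 * f := by linarith
  have h0 : (0:ℤ) ≤ 5 * u + 10 * f := by linarith
  have hsq : (5 * u + 10 * f) * (5 * u + 10 * f) ≤ (a + 10 * f) * (a + 10 * f) :=
    mul_le_mul h1 h1 h0 (by linarith)
  nlinarith [hsq, key]

theorem stmt_18 (F L : ℤ → ℤ)
    (hF1 : F 1 = 1) (hF2 : F 2 = 1)
    (hFrec : ∀ n : ℤ, F (n + 2) = F (n + 1) + F n)
    (hL1 : L 1 = 1) (hL2 : L 2 = 3)
    (hLrec : ∀ n : ℤ, L (n + 2) = L (n + 1) + L n) :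
    (∀ m y : ℤ, 4 ≤ m → 1 ≤ y → y ≤ (m - 2) / 2 →
      ((L (m - 2) + L (m - 4 * y) : ℤ) : ℝ) / (5 * (F (m - 1) : ℝ)) >
        Real.sqrt 5 - 2) ∧
    (∀ m : ℤ, 4 ≤ m → m ≠ 5 → m ≠ 7 →
      ((L (m - 2) + L (m - 4) : ℤ) : ℝ) / (5 * (F (m - 1) : ℝ)) ≥ 8 / 21) := by
  -- flexible recurrence forms
  have hF3 : ∀ a b c : ℤ, a = c + 2 → b = c + 1 → F a = F b + F c := by
    intro a b c ha hb; subst ha; subst hb; exact hFrec c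
  have hL3 : ∀ a b c : ℤ, a = c + 2 → b = c + 1 → L a = L b + L c := by
    intro a b c ha hb; subst ha; subst hb; exact hLrec c
  -- small values
  have hF0 : F 0 = 0 := by have := hF3 2 1 0 (by ring) (by ring); linarith
  have hFm1 : F (-1) = 1 := by have := hF3 1 0 (-1) (by ring) (by ring); linarith
  have hFm2 : F (-2) = -1 := by have := hF3 0 (-1) (-2) (by ring) (by ring); linarith
  have hFm3 : F (-3) = 2 := by have := hF3 (-1) (-2) (-3) (by ring) (by ring); linarith
  have hFm4 : F (-4) = -3 := by have := hF3 (-2) (-3) (-4) (by ring) (by ring); linarith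
  have hFm5 : F (-5) = 5 := by have := hF3 (-3) (-4) (-5) (by ring) (by ring); linarith
  have hL0 : L 0 = 2 := by have := hL3 2 1 0 (by ring) (by ring); linarith
  have hLm1 : L (-1) = -1 := by have := hL3 1 0 (-1) (by ring) (by ring); linarith
  -- nonnegativity and monotonicity of F on [0, ∞)
  have hFstep : ∀ n : ℤ, 0 ≤ n → 0 ≤ F n ∧ F n ≤ F (n + 1) := by
    refine fun n hn => Int.le_induction (motive := fun n _ => 0 ≤ F n ∧ F n ≤ F (n + 1)) ?_ ?_ n hn
    · constructor
      · rw [hF0]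
      · rw [hF0, show (0:ℤ) + 1 = 1 from by ring, hF1]; norm_num
    · intro n _ ih
      have h := hF3 (n + 1 + 1) (n + 1) n (by ring) (by ring)
      exact ⟨by linarith [ih.1, ih.2], by linarith [ih.1, ih.2]⟩
  have hFmono : ∀ a b : ℤ, 0 ≤ a → a ≤ b → F a ≤ F b := by
    intro a b ha hab
    refine Int.le_induction (motive := fun b _ => F a ≤ F b) (le_refl _) ?_ b hab
    intro n hn ih
    have := (hFstep n (le_trans ha hn)).2
    linarith
  have hFpos : ∀ n : ℤ, 1 ≤ n → 1 ≤ F n := by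
    intro n hn
    have := hFmono 1 n (by norm_num) hn
    omega
  have hFnn : ∀ n : ℤ, 0 ≤ n → 0 ≤ F n := fun n hn => (hFstep n hn).1
  -- L in terms of F
  have hLFkey : ∀ n : ℤ, L n = F (n + 1) + F (n - 1) ∧ L (n + 1) = F (n + 2) + F n := by
    have base : L 0 = F (0 + 1) + F (0 - 1) ∧ L (0 + 1) = F (0 + 2) + F 0 := by
      norm_num [hL0, hL1, hF0, hF1, hF2, hFm1]
    have up : ∀ n : ℤ, (L n = F (n + 1) + F (n - 1) ∧ L (n + 1) = F (n + 2) + F n) →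
        (L (n+1) = F (n+1+1) + F (n+1-1) ∧ L (n+1+1) = F (n+1+2) + F (n+1)) := by
      intro n ⟨ih1, ih2⟩
      have e1 : F (n + 3) = F (n + 2) + F (n + 1) := hF3 _ _ _ (by ring) (by ring)
      have e2 : F (n + 1) = F n + F (n - 1) := hF3 _ _ _ (by ring) (by ring)
      have e3 : L (n + 2) = L (n + 1) + L n := hL3 _ _ _ (by ring) (by ring)
      constructor
      · rw [show n+1+1 = n+2 from by ring, show n+1-1 = n from by ring]; exact ih2
      · rw [show n+1+1 = n+2 from by ring, show n+1+2 = n+3 from by ring]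
        rw [e3, ih1, ih2, e1, e2]; ring
    have down : ∀ n : ℤ, (L n = F (n + 1) + F (n - 1) ∧ L (n + 1) = F (n + 2) + F n) →
        (L (n-1) = F (n-1+1) + F (n-1-1) ∧ L (n-1+1) = F (n-1+2) + F (n-1)) := by
      intro n ⟨ih1, ih2⟩
      have e1 : F (n + 2) = F (n + 1) + F n := hF3 _ _ _ (by ring) (by ring)
      have e2 : F n = F (n - 1) + F (n - 2) := hF3 _ _ _ (by ring) (by ring)
      have e3 : L (n + 1) = L n + L (n - 1) := hL3 _ _ _ (by ring) (by ring)
      constructor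
      · rw [show n-1+1 = n from by ring, show n-1-1 = n-2 from by ring]
        have : L (n - 1) = L (n + 1) - L n := by linarith
        rw [this, ih1, ih2, e1, e2]; ring
      · rw [show n-1+1 = n from by ring, show n-1+2 = n+1 from by ring]
        exact ih1
    intro n
    induction n using Int.induction_on with
    | zero => exact base
    | succ i ih => exact up i ih
    | pred i ih => exact down (-i) ih
  have hLF : ∀ a b c : ℤ, b = a + 1 → c = a - 1 → L a = F b + F c := by
    intro a b c hb hc; subst hb; subst hc; exact (hLFkey a).1
  -- L is positive and monotone for nonnegative indices
  have hLpos : ∀ n : ℤ, 0 ≤ n → 1 ≤ L n := by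
    intro n hn
    rcases eq_or_lt_of_le hn with h | h
    · rw [← h, hL0]; norm_num
    · have h1 : 1 ≤ n := h
      rw [hLF n (n+1) (n-1) rfl rfl]
      have := hFpos (n+1) (by omega)
      have := hFnn (n-1) (by omega)
      linarith
  have hLmono : ∀ a b : ℤ, 1 ≤ a → a ≤ b → L a ≤ L b := by
    intro a b ha hab
    rw [hLF a (a+1) (a-1) rfl rfl, hLF b (b+1) (b-1) rfl rfl]
    have := hFmono (a+1) (b+1) (by omega) (by omega)
    have := hFmono (a-1) (b-1) (by omega) (by omega)
    linarith
  -- L at negated odd arguments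
  have hLnegNat : ∀ j : ℕ, L (-(2*(j:ℤ))) = L (2*(j:ℤ)) ∧ L (-(2*(j:ℤ))-1) = -L (2*(j:ℤ)+1) := by
    intro j
    induction j with
    | zero => norm_num [hLm1, hL1]
    | succ i ih =>
      obtain ⟨ih1, ih2⟩ := ih
      set k : ℤ := (i : ℤ) with hk
      have e1 : L (2*k+2) = L (2*k+1) + L (2*k) := hL3 _ _ _ (by ring) (by ring)
      have e2 : L (2*k+3) = L (2*k+2) + L (2*k+1) := hL3 _ _ _ (by ring) (by ring)
      have e3 : L (-(2*k)) = L (-(2*k)-1) + L (-(2*k)-2) := hL3 _ _ _ (by ring) (by ring)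
      have e4 : L (-(2*k)-1) = L (-(2*k)-2) + L (-(2*k)-3) := hL3 _ _ _ (by ring) (by ring)
      have h1 : L (-(2*k)-2) = L (2*k+2) := by linarith
      have h2 : L (-(2*k)-3) = -L (2*k+3) := by linarith
      constructor
      · push_cast
        rw [show -(2*(k+1)) = -(2*k)-2 from by ring, show 2*(k+1) = 2*k+2 from by ring]
        exact h1
      · push_cast
        rw [show -(2*(k+1))-1 = -(2*k)-3 from by ring, show 2*(k+1)+1 = 2*k+3 from by ring]
        exact h2
  have hLnegOdd : ∀ k : ℤ, 1 ≤ k → k % 2 = 1 → L (-k) = -L k := by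
    intro k hk hodd
    set j : ℕ := ((k-1)/2).toNat with hj
    have hjz : (j : ℤ) = (k-1)/2 := Int.toNat_of_nonneg (by omega)
    have hkj : k = 2*(j:ℤ)+1 := by omega
    have := (hLnegNat j).2
    rw [show -(2*(j:ℤ))-1 = -k from by rw [hkj]; ring, show 2*(j:ℤ)+1 = k from hkj.symm] at this
    exact this
  have hLnegEven : ∀ k : ℤ, 0 ≤ k → k % 2 = 0 → L (-k) = L k := by
    intro k hk heven
    set j : ℕ := (k/2).toNat with hj
    have hjz : (j : ℤ) = k/2 := Int.toNat_of_nonneg (by omega)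
    have hkj : k = 2*(j:ℤ) := by omega
    have := (hLnegNat j).1
    rw [show 2*(j:ℤ) = k from hkj.symm] at this
    exact this
  -- Cassini-type identity at even indices
  have hE : ∀ a b c d : ℤ, a = d + 3 → b = d + 2 → c = d + 1 →
      F a ^ 2 - F a * F b - F b ^ 2 = F c ^ 2 - F c * F d - F d ^ 2 := by
    intro a b c d ha hb hc; subst ha; subst hb; subst hc
    have e1 : F (d + 2) = F (d + 1) + F d := hF3 _ _ _ (by ring) (by ring)
    have e2 : F (d + 3) = F (d + 2) + F (d + 1) := hF3 _ _ _ (by ring) (by ring)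
    rw [e2, e1]; ring
  have hCas : ∀ j : ℤ, F (2*j+1) ^ 2 - F (2*j+1) * F (2*j) - F (2*j) ^ 2 = 1 := by
    have base : F (2*(0:ℤ)+1) ^ 2 - F (2*(0:ℤ)+1) * F (2*(0:ℤ)) - F (2*(0:ℤ)) ^ 2 = 1 := by
      norm_num [hF0, hF1]
    have up : ∀ j : ℤ, F (2*j+1) ^ 2 - F (2*j+1) * F (2*j) - F (2*j) ^ 2 = 1 →
        F (2*(j+1)+1) ^ 2 - F (2*(j+1)+1) * F (2*(j+1)) - F (2*(j+1)) ^ 2 = 1 := by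
      intro j ih
      have := hE (2*(j+1)+1) (2*(j+1)) (2*j+1) (2*j) (by ring) (by ring) (by ring)
      linarith
    have down : ∀ j : ℤ, F (2*j+1) ^ 2 - F (2*j+1) * F (2*j) - F (2*j) ^ 2 = 1 →
        F (2*(j-1)+1) ^ 2 - F (2*(j-1)+1) * F (2*(j-1)) - F (2*(j-1)) ^ 2 = 1 := by
      intro j ih
      have := hE (2*j+1) (2*j) (2*(j-1)+1) (2*(j-1)) (by ring) (by ring) (by ring)
      linarith
    intro j
    induction j using Int.induction_on with
    | zero => exact base
    | succ i ih => exact up i ih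
    | pred i ih => exact down (-i) ih
  constructor
  · -- Part 1
    intro m y hm hy1 hy2
    have hfpos : 1 ≤ F (m-1) := hFpos _ (by omega)
    -- the real-number closing step
    have final : ∀ a : ℤ, a = L (m - 2) + L (m - 4 * y) →
        0 < a + 10 * F (m-1) → 125 * F (m-1) ^ 2 < (a + 10 * F (m-1)) ^ 2 →
        ((L (m - 2) + L (m - 4 * y) : ℤ) : ℝ) / (5 * (F (m - 1) : ℝ)) > Real.sqrt 5 - 2 := by
      intro a ha hpos hsq
      rw [← ha]
      have hfZ : (0:ℤ) < F (m-1) := by omega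
      have hfR : (0:ℝ) < (F (m-1) : ℝ) := by exact_mod_cast hfZ
      have hposR : (0:ℝ) < (a:ℝ) + 10 * (F (m-1) : ℝ) := by exact_mod_cast hpos
      have hsqR : 125 * ((F (m-1) : ℝ)) ^ 2 < ((a:ℝ) + 10 * (F (m-1) : ℝ)) ^ 2 := by
        exact_mod_cast hsq
      have hxpos : (0:ℝ) < ((a:ℝ) + 10 * (F (m-1):ℝ)) / (5 * (F (m-1):ℝ)) :=
        div_pos hposR (by linarith)
      have hx2 : (5:ℝ) < (((a:ℝ) + 10 * (F (m-1):ℝ)) / (5 * (F (m-1):ℝ))) ^ 2 := by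
        rw [div_pow, lt_div_iff₀ (by positivity)]
        nlinarith [hsqR]
      have hs : Real.sqrt 5 < ((a:ℝ) + 10 * (F (m-1):ℝ)) / (5 * (F (m-1):ℝ)) :=
        (Real.sqrt_lt' hxpos).mpr hx2
      have heq : ((a:ℝ) + 10 * (F (m-1):ℝ)) / (5 * (F (m-1):ℝ)) =
          (a:ℝ) / (5 * (F (m-1):ℝ)) + 2 := by
        field_simp; ring
      rw [heq] at hs
      linarith
    set d : ℤ := m - 4 * y with hd
    have hdlb : m - 4 ≤ -d + (2*m - 8) := by omega
    have hLm2 : L (m-2) = F (m-1) + F (m-3) := hLF _ _ _ (by ring) (by ring)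
    have hg3 : F (m-1) ≤ 3 * F (m-3) := by
      have e1 : F (m-1) = F (m-2) + F (m-3) := hF3 _ _ _ (by ring) (by ring)
      have e2 : F (m-2) = F (m-3) + F (m-4) := hF3 _ _ _ (by ring) (by ring)
      have := hFmono (m-4) (m-3) (by omega) (by omega)
      linarith
    have hgnn : 0 ≤ F (m-3) := hFnn _ (by omega)
    by_cases hcase : 0 ≤ d ∨ d % 2 = 0
    · -- easy case: L d ≥ 1
      have hLd : 1 ≤ L d := by
        rcases hcase with h | h
        · exact hLpos d h
        · rcases le_or_gt 0 d with h0 | h0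
          · exact hLpos d h0
          · have hk : 0 ≤ -d := by omega
            have := hLnegEven (-d) hk (by omega)
            rw [neg_neg] at this
            rw [this]
            exact hLpos (-d) hk
      refine final (L (m-2) + L d) rfl ?_ ?_
      · rw [hLm2]; linarith [hLd]
      · exact stmt18_aux1 (F (m-1)) (F (m-3)) (L (m-2) + L d) hfpos hgnn hg3
          (by rw [hLm2]; linarith)
    · -- hard case: d < 0, -d odd
      push_neg at hcase
      obtain ⟨hdneg, hodd⟩ := hcase
      set k : ℤ := -d with hk
      have hk1 : 1 ≤ k := by omega
      have hkodd : k % 2 = 1 := by omega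
      have hmodd : m % 2 = 1 := by omega
      have hkub : k ≤ m - 6 := by omega
      have hm7 : 7 ≤ m := by omega
      have hLd : L d = - L k := by
        have := hLnegOdd k hk1 hkodd
        rw [show -k = d from by omega] at this
        exact this
      have hLk : L k ≤ L (m-6) := hLmono k (m-6) hk1 hkub
      have hLm6 : L (m-6) = F (m-5) + F (m-7) := hLF _ _ _ (by ring) (by ring)
      -- identity: L (m-2) - L (m-6) = 5 * F (m-4)
      have e1 : F (m-1) = F (m-2) + F (m-3) := hF3 _ _ _ (by ring) (by ring)
      have e2 : F (m-2) = F (m-3) + F (m-4) := hF3 _ _ _ (by ring) (by ring)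
      have e3 : F (m-3) = F (m-4) + F (m-5) := hF3 _ _ _ (by ring) (by ring)
      have e4 : F (m-4) = F (m-5) + F (m-6) := hF3 _ _ _ (by ring) (by ring)
      have e5 : F (m-5) = F (m-6) + F (m-7) := hF3 _ _ _ (by ring) (by ring)
      have hid : L (m-2) - L (m-6) = 5 * F (m-4) := by
        rw [hLm2, hLm6]; linarith
      -- Cassini at m-5 (even)
      have hj : m - 5 = 2 * ((m-5)/2) := by omega
      have hcas : F (m-4) ^ 2 - F (m-4) * F (m-5) - F (m-5) ^ 2 = 1 := by
        have := hCas ((m-5)/2)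
        rw [show 2 * ((m-5)/2) + 1 = m - 4 from by omega,
            show 2 * ((m-5)/2) = m - 5 from by omega] at this
        exact this
      have hfe : F (m-1) = 3 * F (m-4) + 2 * F (m-5) := by linarith
      have hunn : 0 ≤ F (m-4) := hFnn _ (by omega)
      have hbound : 5 * F (m-4) ≤ L (m-2) + L d := by
        rw [hLd]; linarith
      refine final (L (m-2) + L d) rfl ?_ ?_
      · linarith
      · have key : (5 * F (m-4) + 10 * F (m-1)) ^ 2 = 125 * F (m-1) ^ 2 + 100 := by
          rw [hfe]; linear_combination (100 : ℤ) * hcas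
        exact stmt18_aux2 (F (m-1)) (F (m-4)) (L (m-2) + L d) hfpos hunn key hbound
  · -- Part 2
    intro m hm h5 h7
    have hfpos : 1 ≤ F (m-1) := hFpos _ (by omega)
    have hLm2 : L (m-2) = F (m-1) + F (m-3) := hLF _ _ _ (by ring) (by ring)
    have hLm4 : L (m-4) = F (m-3) + F (m-5) := hLF _ _ _ (by ring) (by ring)
    have e1 : F (m-1) = F (m-2) + F (m-3) := hF3 _ _ _ (by ring) (by ring)
    have e2 : F (m-2) = F (m-3) + F (m-4) := hF3 _ _ _ (by ring) (by ring)
    have e3 : F (m-3) = F (m-4) + F (m-5) := hF3 _ _ _ (by ring) (by ring)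
    have e4 : F (m-4) = F (m-5) + F (m-6) := hF3 _ _ _ (by ring) (by ring)
    have e5 : F (m-5) = F (m-6) + F (m-7) := hF3 _ _ _ (by ring) (by ring)
    have e6 : F (m-6) = F (m-7) + F (m-8) := hF3 _ _ _ (by ring) (by ring)
    have e7 : F (m-7) = F (m-8) + F (m-9) := hF3 _ _ _ (by ring) (by ring)
    have hid : L (m-2) + L (m-4) = 5 * F (m-3) := by rw [hLm2, hLm4]; linarith
    have hid2 : 21 * F (m-3) - 8 * F (m-1) = F (m-9) := by linarith
    have hnn : 0 ≤ F (m-9) := by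
      rcases le_or_gt 9 m with h | h
      · exact hFnn _ (by omega)
      · have hm3 : m = 4 ∨ m = 6 ∨ m = 8 := by omega
        rcases hm3 with rfl | rfl | rfl
        · rw [show (4:ℤ) - 9 = -5 from by norm_num, hFm5]; norm_num
        · rw [show (6:ℤ) - 9 = -3 from by norm_num, hFm3]; norm_num
        · rw [show (8:ℤ) - 9 = -1 from by norm_num, hFm1]; norm_num
    have hint : 40 * F (m-1) ≤ 21 * (L (m-2) + L (m-4)) := by
      rw [hid]; linarith
    have hfZ : (0:ℤ) < F (m-1) := by omega
    have hfR : (0:ℝ) < (F (m-1) : ℝ) := by exact_mod_cast hfZ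
    have h5f : (0:ℝ) < 5 * (F (m-1) : ℝ) := by linarith
    rw [ge_iff_le, le_div_iff₀ h5f]
    have hintR : (40 : ℝ) * (F (m-1) : ℝ) ≤ 21 * ((L (m-2) : ℝ) + (L (m-4) : ℝ)) := by
      exact_mod_cast hint
    push_cast
    linarith
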